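/- Let o_m be as above with residue field of even characteristic, and let A = [[0, a⁻¹α],[a, β]] ∈ M_2(o_m) with β a unit. Then the determinant map from the centralizer C_{GL_2(o_m)}(A) to o_m^× is surjective. -/

import Mathlib

/-- Newton iteration for the quadratic `x^2 + b*x*y - c*y^2 - w` in the variable `y`,
in a ring where `p ^ m = 0`. -/
lemma newton_aux {R : Type*} [CommRing R] (p : R) (m : ℕ) (hp : p ^ m = 0)
    (b c x w : R) :
    ∀ k n : ℕ, ∀ y : R, 1 ≤ n → m ≤ n + k →
      p ^ n ∣ (x ^ 2 + b * x * y - c * y ^ 2 - w) →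
      IsUnit (b * x - 2 * c * y) →
      ∃ z : R, x ^ 2 + b * x * z - c * z ^ 2 - w = 0 := by
  intro k
  induction k with
  | zero =>
    intro n y h1 h2 hdvd _
    refine ⟨y, ?_⟩
    have hpn : p ^ n = 0 := by
      have : p ^ n = p ^ m * p ^ (n - m) := by rw [← pow_add]; congr 1; omega
      rw [this, hp, zero_mul]
    rw [hpn, zero_dvd_iff] at hdvd
    exact hdvd
  | succ k ih =>
    intro n y h1 h2 hdvd hu
    obtain ⟨v, hv⟩ := hu.exists_right_inv
    have hpe : p ^ n ∣ -(x ^ 2 + b * x * y - c * y ^ 2 - w) * v :=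
      (dvd_neg.mpr hdvd).mul_right v
    have hkey : x ^ 2 + b * x * (y + -(x ^ 2 + b * x * y - c * y ^ 2 - w) * v)
        - c * (y + -(x ^ 2 + b * x * y - c * y ^ 2 - w) * v) ^ 2 - w
        = -(c * (-(x ^ 2 + b * x * y - c * y ^ 2 - w) * v) ^ 2) := by
      linear_combination (-(x ^ 2 + b * x * y - c * y ^ 2 - w)) * hv
    have h2dvd : p ^ (n + 1) ∣ (-(x ^ 2 + b * x * y - c * y ^ 2 - w) * v) ^ 2 := by
      have hnn : p ^ (n + 1) ∣ p ^ n * p ^ n := by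
        rw [← pow_add]; exact pow_dvd_pow _ (by omega)
      exact hnn.trans (by rw [sq]; exact mul_dvd_mul hpe hpe)
    have hnil : ∀ r : R, p ∣ r → IsNilpotent r := by
      rintro r ⟨t, rfl⟩
      exact ⟨m, by rw [mul_pow, hp, zero_mul]⟩
    have hp1 : p ∣ -(x ^ 2 + b * x * y - c * y ^ 2 - w) * v :=
      ((dvd_pow_self p (by omega : n ≠ 0)).trans hpe)
    refine ih (n + 1) (y + -(x ^ 2 + b * x * y - c * y ^ 2 - w) * v) (by omega) (by omega)
      ?_ ?_
    · rw [hkey]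
      exact dvd_neg.mpr (h2dvd.mul_left c)
    · have heq : b * x - 2 * c * (y + -(x ^ 2 + b * x * y - c * y ^ 2 - w) * v)
          = (b * x - 2 * c * y) + -(2 * c * (-(x ^ 2 + b * x * y - c * y ^ 2 - w) * v)) := by
        ring
      rw [heq]
      exact IsNilpotent.isUnit_add_left_of_commute
        (hnil _ (dvd_neg.mpr (hp1.mul_left (2 * c)))) hu (Commute.all _ _)

/-- In a finite residue ring `O ⧸ I` with `I` maximal and `2 ∈ I`, every element
is a square. -/
lemma residue_sq {O : Type*} [CommRing O] (I : Ideal O) [I.IsMaximal]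
    [Finite (O ⧸ I)] (h2 : (2 : O) ∈ I) (x : O ⧸ I) : IsSquare x := by
  letI : Field (O ⧸ I) := Ideal.Quotient.field I
  have h2k : (2 : O ⧸ I) = 0 := by
    have h0 : Ideal.Quotient.mk I (2 : O) = 0 := Ideal.Quotient.eq_zero_iff_mem.mpr h2
    rwa [map_ofNat] at h0
  haveI := ringChar.charP (O ⧸ I)
  have hchar : ringChar (O ⧸ I) = 2 := by
    have hd : ringChar (O ⧸ I) ∣ 2 :=
      (CharP.cast_eq_zero_iff (O ⧸ I) (ringChar (O ⧸ I)) 2).mp (by exact_mod_cast h2k)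
    rcases Nat.prime_two.eq_one_or_self_of_dvd _ hd with h | h
    · exact absurd h (CharP.char_ne_one (O ⧸ I) _)
    · exact h
  exact FiniteField.isSquare_of_char_two hchar x

/-- for `A = [[0, a⁻¹α],[a, β]]` over `o_m` (residue characteristic 2)
with `β` a unit, the determinant map from the centralizer of `A` in `GL₂(o_m)`
onto `o_m^×` is surjective. -/
theorem stmt_3 {O : Type*} [CommRing O] [IsDomain O] [IsDiscreteValuationRing O]
    (π : O) (hπ : Irreducible π)
    [IsAdicComplete (Ideal.span {π}) O] [Finite (O ⧸ Ideal.span {π})]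
    (hres2 : π ∣ 2)
    (m : ℕ) (hm : 1 ≤ m)
    (a β : (O ⧸ Ideal.span {π ^ m})ˣ) (α : O ⧸ Ideal.span {π ^ m})
    (w : (O ⧸ Ideal.span {π ^ m})ˣ) :
    ∃ M : Matrix (Fin 2) (Fin 2) (O ⧸ Ideal.span {π ^ m}),
      M * !![0, ((a⁻¹ : (O ⧸ Ideal.span {π ^ m})ˣ) : O ⧸ Ideal.span {π ^ m}) * α;
             ((a : (O ⧸ Ideal.span {π ^ m})ˣ) : O ⧸ Ideal.span {π ^ m}),
             ((β : (O ⧸ Ideal.span {π ^ m})ˣ) : O ⧸ Ideal.span {π ^ m})] =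
        !![0, ((a⁻¹ : (O ⧸ Ideal.span {π ^ m})ˣ) : O ⧸ Ideal.span {π ^ m}) * α;
           ((a : (O ⧸ Ideal.span {π ^ m})ˣ) : O ⧸ Ideal.span {π ^ m}),
           ((β : (O ⧸ Ideal.span {π ^ m})ˣ) : O ⧸ Ideal.span {π ^ m})] * M ∧
      IsUnit M.det ∧ M.det = (w : O ⧸ Ideal.span {π ^ m}) := by
  haveI hmax : (Ideal.span {π}).IsMaximal := PrincipalIdealRing.isMaximal_of_irreducible hπ
  -- p^m = 0 in the quotient
  have hpm : (Ideal.Quotient.mk (Ideal.span {π ^ m}) π) ^ m = 0 := by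
    rw [← map_pow]
    exact Ideal.Quotient.eq_zero_iff_mem.mpr (Ideal.mem_span_singleton_self _)
  -- find a square root of w modulo π
  obtain ⟨w0, hw0⟩ := Ideal.Quotient.mk_surjective
    ((w : O ⧸ Ideal.span {π ^ m}))
  obtain ⟨s, hs⟩ := residue_sq (Ideal.span {π}) (Ideal.mem_span_singleton.mpr hres2)
    (Ideal.Quotient.mk (Ideal.span {π}) w0)
  obtain ⟨X, hX⟩ := Ideal.Quotient.mk_surjective s
  have hmem : X * X - w0 ∈ Ideal.span {π} := by
    apply Ideal.Quotient.eq_zero_iff_mem.mp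
    rw [map_sub, map_mul, hX, hs]
    ring
  obtain ⟨t, ht⟩ := Ideal.mem_span_singleton'.mp hmem
  have hXw : (Ideal.Quotient.mk (Ideal.span {π ^ m}) X) ^ 2 - (w : O ⧸ Ideal.span {π ^ m})
      = (Ideal.Quotient.mk (Ideal.span {π ^ m}) π) * (Ideal.Quotient.mk (Ideal.span {π ^ m}) t) := by
    rw [← hw0]
    have h' := congrArg (Ideal.Quotient.mk (Ideal.span {π ^ m})) ht
    simp only [map_mul, map_sub] at h'
    linear_combination -h'
  have hnilR : ∀ r : O ⧸ Ideal.span {π ^ m},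
      (Ideal.Quotient.mk (Ideal.span {π ^ m}) π) ∣ r → IsNilpotent r := by
    rintro r ⟨t', rfl⟩
    exact ⟨m, by rw [mul_pow, hpm, zero_mul]⟩
  have hxunit : IsUnit (Ideal.Quotient.mk (Ideal.span {π ^ m}) X) := by
    have hsq : (Ideal.Quotient.mk (Ideal.span {π ^ m}) X) *
        (Ideal.Quotient.mk (Ideal.span {π ^ m}) X)
        = (w : O ⧸ Ideal.span {π ^ m}) +
          (Ideal.Quotient.mk (Ideal.span {π ^ m}) π) *
            (Ideal.Quotient.mk (Ideal.span {π ^ m}) t) := by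
      linear_combination hXw
    have : IsUnit ((Ideal.Quotient.mk (Ideal.span {π ^ m}) X) *
        (Ideal.Quotient.mk (Ideal.span {π ^ m}) X)) := by
      rw [hsq]
      exact IsNilpotent.isUnit_add_left_of_commute
        (hnilR _ ⟨Ideal.Quotient.mk (Ideal.span {π ^ m}) t, rfl⟩) w.isUnit (Commute.all _ _)
    exact isUnit_of_mul_isUnit_left this
  have hdvd0 : (Ideal.Quotient.mk (Ideal.span {π ^ m}) π) ^ 1 ∣
      ((Ideal.Quotient.mk (Ideal.span {π ^ m}) X) ^ 2 +
        (β : O ⧸ Ideal.span {π ^ m}) * (Ideal.Quotient.mk (Ideal.span {π ^ m}) X) * 0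
        - α * 0 ^ 2 - (w : O ⧸ Ideal.span {π ^ m})) :=
    ⟨Ideal.Quotient.mk (Ideal.span {π ^ m}) t, by rw [pow_one]; linear_combination hXw⟩
  have hu0 : IsUnit ((β : O ⧸ Ideal.span {π ^ m}) *
      (Ideal.Quotient.mk (Ideal.span {π ^ m}) X) - 2 * α * 0) := by
    simpa using β.isUnit.mul hxunit
  obtain ⟨z, hz⟩ := newton_aux (Ideal.Quotient.mk (Ideal.span {π ^ m}) π) m hpm
    (β : O ⧸ Ideal.span {π ^ m}) α (Ideal.Quotient.mk (Ideal.span {π ^ m}) X)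
    (w : O ⧸ Ideal.span {π ^ m}) m 1 0 le_rfl (by omega) hdvd0 hu0
  have ha : ((a⁻¹ : (O ⧸ Ideal.span {π ^ m})ˣ) : O ⧸ Ideal.span {π ^ m}) *
      ((a : (O ⧸ Ideal.span {π ^ m})ˣ) : O ⧸ Ideal.span {π ^ m}) = 1 := a.inv_mul
  refine ⟨!![Ideal.Quotient.mk (Ideal.span {π ^ m}) X,
            z * (((a⁻¹ : (O ⧸ Ideal.span {π ^ m})ˣ) : O ⧸ Ideal.span {π ^ m}) * α);
            z * ((a : (O ⧸ Ideal.span {π ^ m})ˣ) : O ⧸ Ideal.span {π ^ m}),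
            Ideal.Quotient.mk (Ideal.span {π ^ m}) X +
              z * ((β : (O ⧸ Ideal.span {π ^ m})ˣ) : O ⧸ Ideal.span {π ^ m})], ?_, ?_, ?_⟩
  · ext i j
    fin_cases i <;> fin_cases j <;>
      simp [Matrix.mul_apply, Fin.sum_univ_two] <;> ring
  · rw [Matrix.det_fin_two_of]
    have : (Ideal.Quotient.mk (Ideal.span {π ^ m}) X) *
        (Ideal.Quotient.mk (Ideal.span {π ^ m}) X +
          z * ((β : (O ⧸ Ideal.span {π ^ m})ˣ) : O ⧸ Ideal.span {π ^ m})) -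
        z * (((a⁻¹ : (O ⧸ Ideal.span {π ^ m})ˣ) : O ⧸ Ideal.span {π ^ m}) * α) *
        (z * ((a : (O ⧸ Ideal.span {π ^ m})ˣ) : O ⧸ Ideal.span {π ^ m}))
        = (w : O ⧸ Ideal.span {π ^ m}) := by
      linear_combination hz - α * z ^ 2 * ha
    rw [this]
    exact w.isUnit
  · rw [Matrix.det_fin_two_of]
    linear_combination hz - α * z ^ 2 * ha
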